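/- Let G be an acyclic transitive digraph on a finite vertex set V and let S ⊆ G be a 2-dimensional subgraph of G. Then the complement of S is transitively orientable, and for any transitive orientation H_S of the complement of S, setting H := H_S ∩ (complement of G), the digraph S' := G \ ucl(tcl(H)) is a 2-dimensional subgraph of G with S ⊆ S'. -/

import Mathlib

/-- Undirected closure of a digraph: `E ∪ E⁻¹`. -/
def ucl {V : Type*} (E : V → V → Prop) : V → V → Prop := fun a b => E a b ∨ E b a

/-- Complement of a digraph: all pairs of distinct vertices not in `ucl E`. -/
def cmpl {V : Type*} (E : V → V → Prop) : V → V → Prop := fun a b => a ≠ b ∧ ¬ ucl E a b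

/-- A digraph is oriented iff `E ∩ E⁻¹ = ∅`. -/
def Oriented {V : Type*} (E : V → V → Prop) : Prop := ∀ a b, E a b → ¬ E b a

/-- `O` is an orientation of `E`: a maximal oriented subset of `E`. -/
def IsOrientation {V : Type*} (O E : V → V → Prop) : Prop :=
  (∀ a b, O a b → E a b) ∧ Oriented O ∧
    ∀ O' : V → V → Prop, (∀ a b, O' a b → E a b) → Oriented O' →
      (∀ a b, O a b → O' a b) → ∀ a b, O' a b → O a b

/-- Transitivity of a digraph: `(a,b) ∈ E`, `(b,c) ∈ E` and `a ≠ c` imply `(a,c) ∈ E`. -/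
def TransD {V : Type*} (E : V → V → Prop) : Prop :=
  ∀ a b c, E a b → E b c → a ≠ c → E a c

/-- Transitive closure of a digraph. -/
def tcl {V : Type*} (E : V → V → Prop) : V → V → Prop := Relation.TransGen E

/-- A digraph is acyclic iff its transitive closure is irreflexive. -/
def Acyclic {V : Type*} (E : V → V → Prop) : Prop := Irreflexive (tcl E)

/-- A transitive orientation of `E` is an orientation of `E` that is transitive. -/
def IsTransOrientation {V : Type*} (O E : V → V → Prop) : Prop :=
  IsOrientation O E ∧ TransD O

/-- `E` is transitively orientable iff it has a transitive orientation. -/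
def TransOrientable {V : Type*} (E : V → V → Prop) : Prop := ∃ O, IsTransOrientation O E

/-- `L` is a strict linear order on the vertex set. -/
def IsStrictLinear {V : Type*} (L : V → V → Prop) : Prop :=
  Irreflexive L ∧ Transitive L ∧ ∀ a b : V, a ≠ b → L a b ∨ L b a

/-- `E` is 2-dimensional: the intersection of two strict linear orders. -/
def TwoDim {V : Type*} (E : V → V → Prop) : Prop :=
  ∃ L₁ L₂ : V → V → Prop, IsStrictLinear L₁ ∧ IsStrictLinear L₂ ∧
    ∀ a b, E a b ↔ L₁ a b ∧ L₂ a b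

/-- Direct forcing `Γ` between edges of an undirected graph `E`:
`(a,b) Γ (c,d)` iff both are edges of `E` and either `a = c` with `b, d` non-adjacent,
or `b = d` with `a, c` non-adjacent. -/
def Forces {V : Type*} (E : V → V → Prop) (e f : V × V) : Prop :=
  E e.1 e.2 ∧ E f.1 f.2 ∧
    ((e.1 = f.1 ∧ e.2 ≠ f.2 ∧ ¬ E e.2 f.2) ∨ (e.2 = f.2 ∧ e.1 ≠ f.1 ∧ ¬ E e.1 f.1))

/-- `S` is a 2-dimensional subgraph of `G`: a subgraph that is a 2-dimensional
acyclic transitive digraph. -/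
def TwoDimSubgraph {V : Type*} (G S : V → V → Prop) : Prop :=
  (∀ a b, S a b → G a b) ∧ Irreflexive S ∧ TransD S ∧ Acyclic S ∧ TwoDim S

/-- A permutation graph: an undirected graph such that both it and its complement
are transitively orientable. -/
def PermGraph {V : Type*} (E : V → V → Prop) : Prop :=
  Irreflexive E ∧ (∀ a b, E a b → E b a) ∧ TransOrientable E ∧ TransOrientable (cmpl E)

/-- `S` is a permutation subgraph of `G`: an undirected subgraph of `G` that is a
permutation graph. -/
def PermSubgraph {V : Type*} (G S : V → V → Prop) : Prop :=
  (∀ a b, S a b → G a b) ∧ PermGraph S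


section ImproveHelpers

variable {V : Type*}

private lemma tcl_subset_HS {HS E : V → V → Prop}
    (hsub : ∀ a b, E a b → HS a b) (hor : Oriented HS) (htr : TransD HS) :
    ∀ a b, Relation.TransGen E a b → HS a b := by
  intro a b h
  induction h with
  | single h => exact hsub _ _ h
  | tail hab hbc ih =>
    rename_i b c
    by_cases hac : a = c
    · subst hac
      exact absurd (hsub _ _ hbc) (hor _ _ ih)
    · exact htr _ _ _ ih (hsub _ _ hbc) hac

private lemma strictLinear_union {G H : V → V → Prop}
    (hGirr : Irreflexive G)
    (hGasym : ∀ a b, G a b → ¬ G b a)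
    (hGtr : ∀ a b c, G a b → G b c → G a c)
    (hH : ∀ a b, H a b → ¬ G a b ∧ ¬ G b a)
    (hKasym : ∀ a b, Relation.TransGen H a b → ¬ Relation.TransGen H b a)
    (hKtot : ∀ a b, a ≠ b → ¬ G a b → ¬ G b a →
      Relation.TransGen H a b ∨ Relation.TransGen H b a) :
    IsStrictLinear
      (fun a b => (G a b ∧ ¬ ucl (Relation.TransGen H) a b) ∨ Relation.TransGen H a b) := by
  set K := Relation.TransGen H with hK
  -- Mixing lemma C : S'-edge followed by a K-edge
  have lemC : ∀ a b c, G a b → ¬ ucl K a b → K b c → K a c ∨ G a c := by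
    intro a b c hab hnab hbc
    induction hbc with
    | single h =>
      rename_i c
      obtain ⟨hnbc, hncb⟩ := hH _ _ h
      by_cases hac : G a c
      · exact Or.inr hac
      by_cases hca : G c a
      · exact absurd (hGtr _ _ _ hca hab) hncb
      have hne : a ≠ c := by rintro rfl; exact hncb hab
      rcases hKtot a c hne hac hca with h2 | h2
      · exact Or.inl h2
      · exact absurd (Or.inr ((Relation.TransGen.single h).trans h2)) hnab
    | tail hbm hmc ih =>
      rename_i m c
      rcases ih with h | h
      · exact Or.inl (h.tail hmc)
      · obtain ⟨hnmc, hncm⟩ := hH _ _ hmc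
        by_cases hac : G a c
        · exact Or.inr hac
        by_cases hca : G c a
        · exact absurd (hGtr _ _ _ hca h) hncm
        have hne : a ≠ c := by rintro rfl; exact hncm h
        rcases hKtot a c hne hac hca with h2 | h2
        · exact Or.inl h2
        · exact absurd
            (Or.inr (hbm.trans ((Relation.TransGen.single hmc).trans h2))) hnab
  -- Mixing lemma C' : K-edge followed by an S'-edge
  have lemC' : ∀ a b c, K a b → G b c → ¬ ucl K b c → K a c ∨ G a c := by
    intro a b c hab hbc hnbc
    induction hab using Relation.TransGen.head_induction_on with
    | single h =>
      rename_i x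
      obtain ⟨hnxb, hnbx⟩ := hH _ _ h
      by_cases hxc : G x c
      · exact Or.inr hxc
      by_cases hcx : G c x
      · exact absurd (hGtr _ _ _ hbc hcx) hnbx
      have hne : x ≠ c := by rintro rfl; exact hnbx hbc
      rcases hKtot x c hne hxc hcx with h2 | h2
      · exact Or.inl h2
      · exact absurd (Or.inr (h2.tail h)) hnbc
    | head h' hmb ihp =>
      rename_i x m
      rcases ihp with h | h
      · exact Or.inl (Relation.TransGen.head h' h)
      · obtain ⟨hnxm, hnmx⟩ := hH _ _ h'
        by_cases hxc : G x c
        · exact Or.inr hxc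
        by_cases hcx : G c x
        · exact absurd (hGtr _ _ _ h hcx) hnmx
        have hne : x ≠ c := by rintro rfl; exact hnmx h
        rcases hKtot x c hne hxc hcx with h2 | h2
        · exact Or.inl h2
        · exact absurd
            (Or.inr (h2.trans (Relation.TransGen.head h' hmb))) hnbc
  refine ⟨?_, ?_, ?_⟩
  · rintro a (⟨h, _⟩ | h)
    · exact hGirr a h
    · exact hKasym a a h h
  · rintro a b c (⟨hab, hnab⟩ | hab) (⟨hbc, hnbc⟩ | hbc)
    · have hac : G a c := hGtr _ _ _ hab hbc
      by_cases h : ucl K a c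
      · rcases h with h | h
        · exact Or.inr h
        · rcases lemC' c a b h hab hnab with h2 | h2
          · exact absurd (Or.inr h2) hnbc
          · exact absurd hbc (hGasym _ _ h2)
      · exact Or.inl ⟨hac, h⟩
    · rcases lemC a b c hab hnab hbc with h | h
      · exact Or.inr h
      · by_cases h2 : ucl K a c
        · rcases h2 with h2 | h2
          · exact Or.inr h2
          · exact absurd (Or.inr (hbc.trans h2)) hnab
        · exact Or.inl ⟨h, h2⟩
    · rcases lemC' a b c hab hbc hnbc with h | h
      · exact Or.inr h
      · by_cases h2 : ucl K a c
        · rcases h2 with h2 | h2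
          · exact Or.inr h2
          · exact absurd (Or.inr (h2.trans hab)) hnbc
        · exact Or.inl ⟨h, h2⟩
    · exact Or.inr (hab.trans hbc)
  · intro a b hne
    by_cases hab : G a b
    · by_cases h : ucl K a b
      · rcases h with h | h
        · exact Or.inl (Or.inr h)
        · exact Or.inr (Or.inr h)
      · exact Or.inl (Or.inl ⟨hab, h⟩)
    · by_cases hba : G b a
      · by_cases h : ucl K b a
        · rcases h with h | h
          · exact Or.inr (Or.inr h)
          · exact Or.inl (Or.inr h)
        · exact Or.inr (Or.inl ⟨hba, h⟩)
      · rcases hKtot a b hne hab hba with h | h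
        · exact Or.inl (Or.inr h)
        · exact Or.inr (Or.inr h)

end ImproveHelpers

theorem improve_two_dimensional_subgraph
    {V : Type*} [Fintype V] (G S : V → V → Prop)
    (hirr : Irreflexive G) (hacyc : Acyclic G) (htrans : TransD G)
    (hS : TwoDimSubgraph G S) :
    TransOrientable (cmpl S) ∧
    ∀ HS : V → V → Prop, IsTransOrientation HS (cmpl S) →
      TwoDimSubgraph G
        (fun a b => G a b ∧ ¬ ucl (tcl (fun x y => HS x y ∧ cmpl G x y)) a b) ∧
      ∀ a b, S a b →
        G a b ∧ ¬ ucl (tcl (fun x y => HS x y ∧ cmpl G x y)) a b := by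
  obtain ⟨hSsub, hSirr, hStrans, hSacyc, L₁, L₂, hL₁, hL₂, hSeq⟩ := hS
  have hGasym : ∀ a b, G a b → ¬ G b a := fun a b h h' =>
    hacyc a ((Relation.TransGen.single h).tail h')
  have hGtr : ∀ a b c, G a b → G b c → G a c := by
    intro a b c h1 h2
    by_cases hac : a = c
    · subst hac; exact absurd h2 (hGasym _ _ h1)
    · exact htrans _ _ _ h1 h2 hac
  constructor
  · -- cmpl S is transitively orientable
    refine ⟨fun a b => cmpl S a b ∧ L₁ a b ∧ L₂ b a, ⟨⟨fun a b h => h.1, ?_, ?_⟩, ?_⟩⟩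
    · rintro a b ⟨_, h1, _⟩ ⟨_, h2, _⟩
      exact hL₁.1 a (hL₁.2.1 h1 h2)
    · intro O' hsub' hor' hext a b h
      obtain ⟨hne, hn⟩ := hsub' a b h
      rcases hL₁.2.2 a b hne with h1 | h1 <;> rcases hL₂.2.2 a b hne with h2 | h2
      · exact absurd (Or.inl ((hSeq a b).2 ⟨h1, h2⟩)) hn
      · exact ⟨⟨hne, hn⟩, h1, h2⟩
      · have : O' b a := hext b a ⟨⟨hne.symm, fun hh => hn (Or.symm hh)⟩, h1, h2⟩
        exact absurd h (hor' b a this)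
      · exact absurd (Or.inr ((hSeq b a).2 ⟨h1, h2⟩)) hn
    · rintro a b c ⟨⟨hne1, hn1⟩, h1, h2⟩ ⟨⟨hne2, hn2⟩, h3, h4⟩ hne
      refine ⟨⟨hne, ?_⟩, hL₁.2.1 h1 h3, hL₂.2.1 h4 h2⟩
      rintro (h | h)
      · exact hL₂.1 a (hL₂.2.1 ((hSeq a c).1 h).2 (hL₂.2.1 h4 h2))
      · exact hL₁.1 a (hL₁.2.1 (hL₁.2.1 h1 h3) ((hSeq c a).1 h).1)
  · rintro HS ⟨⟨hHSsub, hHSor, hHSmax⟩, hHStr⟩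
    -- totality of HS on cmpl S
    have hHStot : ∀ a b, cmpl S a b → HS a b ∨ HS b a := by
      intro a b hab
      by_contra hcon
      push_neg at hcon
      obtain ⟨h1, h2⟩ := hcon
      have hsub : ∀ x y, (fun x y => HS x y ∨ (x = a ∧ y = b)) x y → cmpl S x y := by
        rintro x y (h | ⟨rfl, rfl⟩)
        · exact hHSsub _ _ h
        · exact hab
      have hor : Oriented (fun x y => HS x y ∨ (x = a ∧ y = b)) := by
        rintro x y (h | ⟨rfl, rfl⟩) (h' | ⟨h3, h4⟩)
        · exact hHSor _ _ h h'
        · subst h3; subst h4; exact h2 h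
        · exact h2 h'
        · exact hab.1 h4
      exact h1 (hHSmax _ hsub hor (fun x y h => Or.inl h) a b (Or.inr ⟨rfl, rfl⟩))
    set H : V → V → Prop := fun x y => HS x y ∧ cmpl G x y with hHdef
    have hH : ∀ a b, H a b → ¬ G a b ∧ ¬ G b a :=
      fun a b h => ⟨fun hg => h.2.2 (Or.inl hg), fun hg => h.2.2 (Or.inr hg)⟩
    have hKHS : ∀ a b, Relation.TransGen H a b → HS a b :=
      tcl_subset_HS (fun a b h => h.1) hHSor hHStr
    have hKasym : ∀ a b, Relation.TransGen H a b → ¬ Relation.TransGen H b a :=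
      fun a b h h' => hHSor a b (hKHS _ _ h) (hKHS _ _ h')
    have hcmplSG : ∀ a b, a ≠ b → ¬ G a b → ¬ G b a → cmpl S a b := by
      intro a b hne hnab hnba
      exact ⟨hne, fun h => h.elim (fun h => hnab (hSsub _ _ h)) (fun h => hnba (hSsub _ _ h))⟩
    have hKtot : ∀ a b, a ≠ b → ¬ G a b → ¬ G b a →
        Relation.TransGen H a b ∨ Relation.TransGen H b a := by
      intro a b hne hnab hnba
      have hcG : cmpl G a b := ⟨hne, fun h => h.elim hnab hnba⟩
      have hcG' : cmpl G b a := ⟨hne.symm, fun h => h.elim hnba hnab⟩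
      rcases hHStot a b (hcmplSG a b hne hnab hnba) with h | h
      · exact Or.inl (Relation.TransGen.single ⟨h, hcG⟩)
      · exact Or.inr (Relation.TransGen.single ⟨h, hcG'⟩)
    set K : V → V → Prop := Relation.TransGen H with hKdef
    -- the two linear orders
    have hM₁ : IsStrictLinear (fun a b => (G a b ∧ ¬ ucl K a b) ∨ K a b) :=
      strictLinear_union hirr hGasym hGtr hH hKasym hKtot
    have hswap : ∀ a b, Relation.TransGen (fun x y => H y x) a b ↔ K b a :=
      fun a b => Relation.transGen_swap
    have hM₂' : IsStrictLinear (fun a b =>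
        (G a b ∧ ¬ ucl (Relation.TransGen (fun x y => H y x)) a b) ∨
          Relation.TransGen (fun x y => H y x) a b) :=
      strictLinear_union hirr hGasym hGtr
        (fun a b h => ⟨(hH _ _ h).2, (hH _ _ h).1⟩)
        (fun a b h h' => hKasym b a ((hswap a b).1 h) ((hswap b a).1 h'))
        (fun a b hne hnab hnba =>
          (hKtot b a hne.symm hnba hnab).imp ((hswap a b).2) ((hswap b a).2))
    have hM₂ : IsStrictLinear (fun a b => (G a b ∧ ¬ ucl K a b) ∨ K b a) := by
      have heq : (fun a b => (G a b ∧ ¬ ucl K a b) ∨ K b a) = (fun a b =>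
          (G a b ∧ ¬ ucl (Relation.TransGen (fun x y => H y x)) a b) ∨
            Relation.TransGen (fun x y => H y x) a b) := by
        funext a b
        apply propext
        have hu : ucl (Relation.TransGen (fun x y => H y x)) a b ↔ ucl K a b := by
          constructor
          · rintro (h | h)
            · exact Or.inr ((hswap a b).1 h)
            · exact Or.inl ((hswap b a).1 h)
          · rintro (h | h)
            · exact Or.inr ((hswap b a).2 h)
            · exact Or.inl ((hswap a b).2 h)
        rw [hu, hswap a b]
      rw [heq]
      exact hM₂'
    -- S' and its basic properties
    have hS'iff : ∀ a b, (G a b ∧ ¬ ucl K a b) ↔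
        ((G a b ∧ ¬ ucl K a b) ∨ K a b) ∧ ((G a b ∧ ¬ ucl K a b) ∨ K b a) := by
      intro a b
      constructor
      · intro h; exact ⟨Or.inl h, Or.inl h⟩
      · rintro ⟨h1 | h1, h2 | h2⟩
        · exact h1
        · exact h1
        · exact h2
        · exact absurd h2 (hKasym a b h1)
    have hsub' : ∀ a b, S a b → G a b ∧ ¬ ucl K a b := by
      intro a b h
      refine ⟨hSsub _ _ h, ?_⟩
      rintro (hk | hk)
      · exact (hHSsub _ _ (hKHS _ _ hk)).2 (Or.inl h)
      · exact (hHSsub _ _ (hKHS _ _ hk)).2 (Or.inr h)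
    refine ⟨⟨fun a b h => h.1, fun a h => hirr a h.1, ?_, ?_, ?_⟩, hsub'⟩
    · -- TransD
      intro a b c h1 h2 _
      exact (hS'iff a c).2
        ⟨hM₁.2.1 ((hS'iff a b).1 h1).1 ((hS'iff b c).1 h2).1,
         hM₂.2.1 ((hS'iff a b).1 h1).2 ((hS'iff b c).1 h2).2⟩
    · -- Acyclic
      intro a h
      have h' : Relation.TransGen (fun a b => (G a b ∧ ¬ ucl K a b) ∨ K a b) a a :=
        Relation.TransGen.mono (fun x y hxy => Or.inl hxy) a a h
      rw [@Relation.transGen_eq_self _ (fun a b => (G a b ∧ ¬ ucl K a b) ∨ K a b) ⟨fun _ _ _ h1 h2 => hM₁.2.1 h1 h2⟩] at h'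
      exact hM₁.1 a h'
    · -- TwoDim
      exact ⟨_, _, hM₁, hM₂, fun a b => hS'iff a b⟩
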